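/- For every n ≥ 1, the splitting graph of the star K_{1,n} admits a signed product cordial labeling. -/

import Mathlib

/-- Number of vertices with label `s` under labeling `α`. -/
def vCount {V : Type} [Fintype V] [DecidableEq V] (α : V → ℤ) (s : ℤ) : ℕ :=
  (Finset.univ.filter (fun v => α v = s)).card

/-- The induced edge label on an unordered pair. -/
def edgeLabel {V : Type} (α : V → ℤ) : Sym2 V → ℤ :=
  Sym2.lift ⟨fun u v => α u * α v, fun u v => mul_comm _ _⟩

/-- Number of edges of `G` with induced label `s` under vertex labeling `α`. -/
def eCount {V : Type} [Fintype V] [DecidableEq V] (G : SimpleGraph V)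
    [DecidableRel G.Adj] (α : V → ℤ) (s : ℤ) : ℕ :=
  (G.edgeFinset.filter (fun e => edgeLabel α e = s)).card

/-- `G` admits a signed product cordial labeling. -/
def IsSignedProductCordial {V : Type} [Fintype V] [DecidableEq V]
    (G : SimpleGraph V) [DecidableRel G.Adj] : Prop :=
  ∃ α : V → ℤ, (∀ v, α v = 1 ∨ α v = -1) ∧
    ((vCount α 1 : ℤ) - (vCount α (-1) : ℤ)).natAbs ≤ 1 ∧
    ((eCount G α 1 : ℤ) - (eCount G α (-1) : ℤ)).natAbs ≤ 1

/-- The splitting graph of `G`: for each vertex `v` (the `inl` copy) a new vertex `v'`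
(the `inr` copy) adjacent to exactly the neighbors of `v` in `G`. -/
def splt {V : Type} (G : SimpleGraph V) : SimpleGraph (V ⊕ V) where
  Adj x y := match x, y with
    | .inl u, .inl v => G.Adj u v
    | .inl u, .inr v => G.Adj u v
    | .inr u, .inl v => G.Adj u v
    | .inr _, .inr _ => False
  symm := ⟨by rintro (u|u) (v|v) h <;> first | exact G.adj_symm h | exact h.elim⟩
  loopless := ⟨by rintro (u|u) h; exact G.irrefl h; exact h⟩

instance {V : Type} (G : SimpleGraph V) [DecidableRel G.Adj] :
    DecidableRel (splt G).Adj := fun x y =>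
  match x, y with
  | .inl u, .inl v => inferInstanceAs (Decidable (G.Adj u v))
  | .inl u, .inr v => inferInstanceAs (Decidable (G.Adj u v))
  | .inr u, .inl v => inferInstanceAs (Decidable (G.Adj u v))
  | .inr _, .inr _ => inferInstanceAs (Decidable False)

/-- The star graph `K_{1,n}`: apex `0`, pendants `1,…,n`. -/
def starGraph (n : ℕ) : SimpleGraph (Fin (n+1)) where
  Adj i j := (i = 0 ∨ j = 0) ∧ i ≠ j
  symm := ⟨fun _ _ h => ⟨h.1.symm, h.2.symm⟩⟩
  loopless := ⟨fun _ h => h.2 rfl⟩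

instance (n : ℕ) : DecidableRel (starGraph n).Adj := fun i j =>
  inferInstanceAs (Decidable ((i = 0 ∨ j = 0) ∧ i ≠ j))

-- ### Auxiliary lemmas

theorem filter_sum_card {A B : Type} [Fintype A] [Fintype B] [DecidableEq A] [DecidableEq B]
    (p : A ⊕ B → Prop) [DecidablePred p] :
    (Finset.univ.filter p).card =
      (Finset.univ.filter (fun a => p (Sum.inl a))).card +
      (Finset.univ.filter (fun b => p (Sum.inr b))).card := by
  rw [← Finset.card_disjSum]
  congr 1
  rw [← Finset.univ_disjSum_univ]
  ext x
  cases x <;> simp [Finset.mem_disjSum]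

theorem fin_filter_card (n : ℕ) (P : ℕ → Prop) [DecidablePred P] :
    (Finset.univ.filter (fun i : Fin (n+1) => P i.val)).card
      = ((Finset.range (n+1)).filter P).card := by
  rw [← Nat.Iio_eq_range, ← Fin.map_valEmbedding_univ, Finset.filter_map, Finset.card_map]
  rfl

theorem ite_one_eq_one (c : Prop) [Decidable c] :
    ((if c then (1:ℤ) else -1) = 1) ↔ c := by split <;> simp_all
theorem ite_one_eq_negone (c : Prop) [Decidable c] :
    ((if c then (1:ℤ) else -1) = -1) ↔ ¬c := by split <;> simp_all

theorem splt_star_edgeFinset (n : ℕ) :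
    (splt (starGraph n)).edgeFinset =
      ((Finset.univ.filter (fun i : Fin (n+1) => i ≠ 0)).image
          (fun i => s(Sum.inl (0 : Fin (n+1)), Sum.inl i))) ∪
      ((Finset.univ.filter (fun i : Fin (n+1) => i ≠ 0)).image
          (fun i => s(Sum.inl (0 : Fin (n+1)), Sum.inr i))) ∪
      ((Finset.univ.filter (fun i : Fin (n+1) => i ≠ 0)).image
          (fun i => s(Sum.inr (0 : Fin (n+1)), Sum.inl i))) := by
  ext e
  induction e using Sym2.ind with
  | _ x y =>
    simp only [SimpleGraph.mem_edgeFinset, SimpleGraph.mem_edgeSet, Finset.mem_union,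
      Finset.mem_image, Finset.mem_filter, Finset.mem_univ, true_and, Sym2.eq_iff]
    rcases x with u | u <;> rcases y with v | v <;>
      simp only [splt, starGraph, Sum.inl.injEq, Sum.inr.injEq, reduceCtorEq, false_and,
        and_false, false_or, or_false, true_and, and_true, exists_eq_right] <;>
      aesop

/-- For every `n ≥ 1`, the splitting graph of the star `K_{1,n}`
admits a signed product cordial labeling. -/
theorem splt_star_signedProductCordial (n : ℕ) (hn : 1 ≤ n) :
    IsSignedProductCordial (splt (starGraph n)) := by
  classical
  set k1 := (n+1)/2 with hk1
  set k0 := n/2 with hk0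
  have hk1n : k1 ≤ n := by omega
  have hk0n : k0 ≤ n := by omega
  refine ⟨Sum.elim (fun i : Fin (n+1) => if i.val ≤ k1 then (1:ℤ) else -1)
      (fun i : Fin (n+1) => if 1 ≤ i.val ∧ i.val ≤ k0 then (1:ℤ) else -1), ?_, ?_, ?_⟩
  · rintro (i | i) <;> simp only [Sum.elim_inl, Sum.elim_inr] <;> split <;> simp
  · -- vertex condition
    have hv1 : vCount (Sum.elim (fun i : Fin (n+1) => if i.val ≤ k1 then (1:ℤ) else -1)
        (fun i : Fin (n+1) => if 1 ≤ i.val ∧ i.val ≤ k0 then (1:ℤ) else -1)) 1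
        = (k1 + 1) + k0 := by
      rw [vCount, filter_sum_card]
      simp only [Sum.elim_inl, Sum.elim_inr, ite_one_eq_one]
      rw [fin_filter_card n (fun m => m ≤ k1), fin_filter_card n (fun m => 1 ≤ m ∧ m ≤ k0)]
      congr 1
      · rw [show (Finset.range (n+1)).filter (fun m => m ≤ k1) = Finset.range (k1+1) by
          ext m; simp [Finset.mem_range]; omega]
        exact Finset.card_range _
      · rw [show (Finset.range (n+1)).filter (fun m => 1 ≤ m ∧ m ≤ k0) = Finset.Icc 1 k0 by
          ext m; simp [Finset.mem_range, Finset.mem_Icc]; omega]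
        rw [Nat.card_Icc]; omega
    have hv2 : vCount (Sum.elim (fun i : Fin (n+1) => if i.val ≤ k1 then (1:ℤ) else -1)
        (fun i : Fin (n+1) => if 1 ≤ i.val ∧ i.val ≤ k0 then (1:ℤ) else -1)) (-1)
        = (n - k1) + (n + 1 - k0) := by
      rw [vCount, filter_sum_card]
      simp only [Sum.elim_inl, Sum.elim_inr, ite_one_eq_negone]
      rw [fin_filter_card n (fun m => ¬ m ≤ k1), fin_filter_card n (fun m => ¬(1 ≤ m ∧ m ≤ k0))]
      congr 1
      · rw [show (Finset.range (n+1)).filter (fun m => ¬ m ≤ k1) = Finset.Icc (k1+1) n by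
          ext m; simp [Finset.mem_range, Finset.mem_Icc]; omega]
        rw [Nat.card_Icc]; omega
      · have := Finset.card_filter_add_card_filter_not
          (s := Finset.range (n+1)) (fun m => 1 ≤ m ∧ m ≤ k0)
        rw [show ((Finset.range (n+1)).filter (fun m => 1 ≤ m ∧ m ≤ k0)) = Finset.Icc 1 k0 by
          ext m; simp [Finset.mem_range, Finset.mem_Icc]; omega, Nat.card_Icc,
          Finset.card_range] at this
        omega
    rw [hv1, hv2]; omega
  · -- edge condition
    set α := Sum.elim (fun i : Fin (n+1) => if i.val ≤ k1 then (1:ℤ) else -1)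
      (fun i : Fin (n+1) => if 1 ≤ i.val ∧ i.val ≤ k0 then (1:ℤ) else -1) with hα
    set P := Finset.univ.filter (fun i : Fin (n+1) => i ≠ 0) with hP
    have hinj1 : Function.Injective
        (fun i : Fin (n+1) => s(Sum.inl (0 : Fin (n+1)), (Sum.inl i : Fin (n+1) ⊕ Fin (n+1)))) := by
      intro a b h; simp [Sym2.eq_iff] at h; aesop
    have hinj2 : Function.Injective
        (fun i : Fin (n+1) => s(Sum.inl (0 : Fin (n+1)), (Sum.inr i : Fin (n+1) ⊕ Fin (n+1)))) := by
      intro a b h; simp [Sym2.eq_iff] at h; aesop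
    have hinj3 : Function.Injective
        (fun i : Fin (n+1) => s(Sum.inr (0 : Fin (n+1)), (Sum.inl i : Fin (n+1) ⊕ Fin (n+1)))) := by
      intro a b h; simp [Sym2.eq_iff] at h; aesop
    have hd12 : Disjoint (P.image (fun i => s(Sum.inl (0 : Fin (n+1)), (Sum.inl i : Fin (n+1) ⊕ Fin (n+1)))))
        (P.image (fun i => s(Sum.inl (0 : Fin (n+1)), (Sum.inr i : Fin (n+1) ⊕ Fin (n+1))))) := by
      rw [Finset.disjoint_left]
      rintro e he1 he2
      simp only [Finset.mem_image, hP, Finset.mem_filter, Finset.mem_univ, true_and] at he1 he2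
      obtain ⟨a, ha, rfl⟩ := he1
      obtain ⟨b, hb, hh⟩ := he2
      rw [Sym2.eq_iff] at hh
      rcases hh with ⟨h1, h2⟩ | ⟨h1, h2⟩ <;> simp_all
    have hd13 : Disjoint (P.image (fun i => s(Sum.inl (0 : Fin (n+1)), (Sum.inl i : Fin (n+1) ⊕ Fin (n+1)))))
        (P.image (fun i => s(Sum.inr (0 : Fin (n+1)), (Sum.inl i : Fin (n+1) ⊕ Fin (n+1))))) := by
      rw [Finset.disjoint_left]
      rintro e he1 he2
      simp only [Finset.mem_image, hP, Finset.mem_filter, Finset.mem_univ, true_and] at he1 he2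
      obtain ⟨a, ha, rfl⟩ := he1
      obtain ⟨b, hb, hh⟩ := he2
      rw [Sym2.eq_iff] at hh
      rcases hh with ⟨h1, h2⟩ | ⟨h1, h2⟩ <;> simp_all
    have hd23 : Disjoint (P.image (fun i => s(Sum.inl (0 : Fin (n+1)), (Sum.inr i : Fin (n+1) ⊕ Fin (n+1)))))
        (P.image (fun i => s(Sum.inr (0 : Fin (n+1)), (Sum.inl i : Fin (n+1) ⊕ Fin (n+1))))) := by
      rw [Finset.disjoint_left]
      rintro e he1 he2
      simp only [Finset.mem_image, hP, Finset.mem_filter, Finset.mem_univ, true_and] at he1 he2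
      obtain ⟨a, ha, rfl⟩ := he1
      obtain ⟨b, hb, hh⟩ := he2
      rw [Sym2.eq_iff] at hh
      rcases hh with ⟨h1, h2⟩ | ⟨h1, h2⟩ <;> simp_all
    have key : ∀ s : ℤ, eCount (splt (starGraph n)) α s =
        (P.filter (fun i => α (Sum.inl 0) * α (Sum.inl i) = s)).card +
        (P.filter (fun i => α (Sum.inl 0) * α (Sum.inr i) = s)).card +
        (P.filter (fun i => α (Sum.inr 0) * α (Sum.inl i) = s)).card := by
      intro s
      rw [eCount, splt_star_edgeFinset, ← hP, Finset.filter_union, Finset.filter_union,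
        Finset.card_union_of_disjoint, Finset.card_union_of_disjoint]
      · rw [Finset.filter_image, Finset.filter_image, Finset.filter_image,
          Finset.card_image_of_injective _ hinj1, Finset.card_image_of_injective _ hinj2,
          Finset.card_image_of_injective _ hinj3]
        simp only [edgeLabel, Sym2.lift_mk]
        rfl
      · exact hd12.mono (Finset.filter_subset _ _) (Finset.filter_subset _ _)
      · exact (Finset.disjoint_union_left.mpr
          ⟨hd13.mono (Finset.filter_subset _ _) (Finset.filter_subset _ _),
           hd23.mono (Finset.filter_subset _ _) (Finset.filter_subset _ _)⟩)
    have hα0 : α (Sum.inl 0) = 1 := by simp [hα]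
    have hβ0 : α (Sum.inr 0) = -1 := by simp [hα]
    have hPf : ∀ (Q : ℕ → Prop) [DecidablePred Q],
        (P.filter (fun i => Q i.val)).card
          = ((Finset.range (n+1)).filter (fun m => ¬ m = 0 ∧ Q m)).card := by
      intro Q _
      rw [hP, Finset.filter_filter, ← fin_filter_card n (fun m => ¬ m = 0 ∧ Q m)]
      congr 1
      ext i
      simp only [Finset.mem_filter, Finset.mem_univ, true_and, ne_eq, Fin.ext_iff, Fin.val_zero]
    have c1 : (P.filter (fun i => α (Sum.inl 0) * α (Sum.inl i) = 1)).card = k1 := by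
      simp only [hα0, one_mul]
      simp only [hα, Sum.elim_inl, ite_one_eq_one]
      rw [hPf (fun m => m ≤ k1)]
      rw [show (Finset.range (n+1)).filter (fun m => ¬ m = 0 ∧ m ≤ k1) = Finset.Icc 1 k1 by
        ext m; simp [Finset.mem_range, Finset.mem_Icc]; omega, Nat.card_Icc]
      omega
    have c2 : (P.filter (fun i => α (Sum.inl 0) * α (Sum.inr i) = 1)).card = k0 := by
      simp only [hα0, one_mul]
      simp only [hα, Sum.elim_inr, ite_one_eq_one]
      rw [hPf (fun m => 1 ≤ m ∧ m ≤ k0)]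
      rw [show (Finset.range (n+1)).filter (fun m => ¬ m = 0 ∧ (1 ≤ m ∧ m ≤ k0))
          = Finset.Icc 1 k0 by
        ext m; simp [Finset.mem_range, Finset.mem_Icc]; omega, Nat.card_Icc]
      omega
    have c3 : (P.filter (fun i => α (Sum.inr 0) * α (Sum.inl i) = 1)).card = n - k1 := by
      simp only [hβ0, neg_one_mul, neg_eq_iff_eq_neg, neg_neg]
      simp only [hα, Sum.elim_inl, ite_one_eq_negone]
      rw [hPf (fun m => ¬ m ≤ k1)]
      rw [show (Finset.range (n+1)).filter (fun m => ¬ m = 0 ∧ ¬ m ≤ k1)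
          = Finset.Icc (k1+1) n by
        ext m; simp [Finset.mem_range, Finset.mem_Icc]; omega, Nat.card_Icc]
      omega
    have c4 : (P.filter (fun i => α (Sum.inl 0) * α (Sum.inl i) = -1)).card = n - k1 := by
      simp only [hα0, one_mul]
      simp only [hα, Sum.elim_inl, ite_one_eq_negone]
      rw [hPf (fun m => ¬ m ≤ k1)]
      rw [show (Finset.range (n+1)).filter (fun m => ¬ m = 0 ∧ ¬ m ≤ k1)
          = Finset.Icc (k1+1) n by
        ext m; simp [Finset.mem_range, Finset.mem_Icc]; omega, Nat.card_Icc]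
      omega
    have c5 : (P.filter (fun i => α (Sum.inl 0) * α (Sum.inr i) = -1)).card = n - k0 := by
      simp only [hα0, one_mul]
      simp only [hα, Sum.elim_inr, ite_one_eq_negone]
      rw [hPf (fun m => ¬ (1 ≤ m ∧ m ≤ k0))]
      rw [show (Finset.range (n+1)).filter (fun m => ¬ m = 0 ∧ ¬ (1 ≤ m ∧ m ≤ k0))
          = Finset.Icc (k0+1) n by
        ext m; simp [Finset.mem_range, Finset.mem_Icc]; omega, Nat.card_Icc]
      omega
    have c6 : (P.filter (fun i => α (Sum.inr 0) * α (Sum.inl i) = -1)).card = k1 := by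
      simp only [hβ0, neg_one_mul, neg_eq_iff_eq_neg, neg_neg]
      simp only [hα, Sum.elim_inl, ite_one_eq_one]
      rw [hPf (fun m => m ≤ k1)]
      rw [show (Finset.range (n+1)).filter (fun m => ¬ m = 0 ∧ m ≤ k1) = Finset.Icc 1 k1 by
        ext m; simp [Finset.mem_range, Finset.mem_Icc]; omega, Nat.card_Icc]
      omega
    rw [key 1, key (-1), c1, c2, c3, c4, c5, c6]
    omega
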